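/- Let A = (a_{n,k}) be an infinite real matrix with ‖A‖ := sup_n ∑_k |a_{n,k}| < ∞. If (C1) lim_n ∑_{k ∈ E} |a_{n,k}| = 0 for every finite set E, (C2) lim_n ∑_k a_{n,k} = 1, and (C3) lim_n ∑_k |a_{n,k}| = 1, then for every bounded real sequence x, limsup_n A_n x ≤ limsup_n x_n. -/

import Mathlib

open Filter

theorem stmt5 (a : ℕ → ℕ → ℝ) (C : ℝ)
    (hnorm : ∀ n, Summable (fun k => |a n k|) ∧ ∑' k, |a n k| ≤ C)
    (hC1 : ∀ E : Finset ℕ, Tendsto (fun n => ∑ k ∈ E, |a n k|) atTop (nhds 0))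
    (hC2 : Tendsto (fun n => ∑' k, a n k) atTop (nhds 1))
    (hC3 : Tendsto (fun n => ∑' k, |a n k|) atTop (nhds 1)) :
    ∀ x : ℕ → ℝ, (∃ M, ∀ n, |x n| ≤ M) →
      limsup (fun n => ∑' k, a n k * x k) atTop ≤ limsup x atTop := by
  rintro x ⟨M, hxM⟩
  set L := limsup x atTop with hL
  have hM0 : 0 ≤ M := (abs_nonneg (x 0)).trans (hxM 0)
  -- summability facts
  have hsa : ∀ n, Summable (fun k => |a n k|) := fun n => (hnorm n).1
  have hsA : ∀ n, Summable (a n) := fun n => (hsa n).of_abs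
  have hsxabs : ∀ n, Summable (fun k => |a n k * x k|) := by
    intro n
    refine Summable.of_nonneg_of_le (fun k => abs_nonneg _) (fun k => ?_) ((hsa n).mul_right M)
    rw [abs_mul]
    exact mul_le_mul_of_nonneg_left (hxM k) (abs_nonneg _)
  have hsx : ∀ n, Summable (fun k => a n k * x k) := fun n => (hsxabs n).of_abs
  -- lower bound for T
  set T := fun n => ∑' k, a n k * x k with hT
  have hTabs : ∀ n, |T n| ≤ C * M := by
    intro n
    have h1 : ‖∑' k, a n k * x k‖ ≤ ∑' k, ‖a n k * x k‖ := by
      apply norm_tsum_le_tsum_norm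
      simp only [Real.norm_eq_abs]
      exact hsxabs n
    have h2 : ∑' k, |a n k * x k| ≤ ∑' k, |a n k| * M := by
      apply Summable.tsum_le_tsum _ (hsxabs n) ((hsa n).mul_right M)
      intro k
      rw [abs_mul]
      exact mul_le_mul_of_nonneg_left (hxM k) (abs_nonneg _)
    have h3 : ∑' k, |a n k| * M = (∑' k, |a n k|) * M := tsum_mul_right
    have h4 : (∑' k, |a n k|) * M ≤ C * M := mul_le_mul_of_nonneg_right (hnorm n).2 hM0
    simp only [Real.norm_eq_abs] at h1
    calc |T n| ≤ ∑' k, |a n k * x k| := h1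
      _ ≤ ∑' k, |a n k| * M := h2
      _ = (∑' k, |a n k|) * M := h3
      _ ≤ C * M := h4
  have hTcob : IsCoboundedUnder (· ≤ ·) atTop T := by
    apply IsBoundedUnder.isCoboundedUnder_le (l := atTop)
    refine ⟨-(C * M), eventually_map.mpr (Eventually.of_forall fun n => ?_)⟩
    exact (abs_le.mp (hTabs n)).1
  have hbx_up : IsBoundedUnder (· ≤ ·) atTop x := by
    refine ⟨M, eventually_map.mpr (Eventually.of_forall fun n => ?_)⟩
    exact (abs_le.mp (hxM n)).2
  -- main estimate
  apply le_of_forall_pos_le_add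
  intro ε hε
  set c := L + ε / 2 with hc
  have hLc : limsup x atTop < c := by rw [hc]; linarith
  obtain ⟨K, hK⟩ := eventually_atTop.mp (eventually_lt_of_limsup_lt hLc hbx_up)
  set E := Finset.range K with hE
  set M' := M + |L| + ε / 2 with hM'
  have hM'0 : 0 ≤ M' := by positivity
  set D := M + |c| with hD
  -- pointwise bound
  have key : ∀ n k, a n k * x k ≤
      a n k * c + ((|a n k| - a n k) * M' + (if k ∈ E then |a n k| * D else 0)) := by
    intro n k
    have hxk : |x k| ≤ M := hxM k
    have habs := abs_nonneg (a n k)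
    by_cases hk : k ∈ E
    · simp only [if_pos hk]
      have h1 : a n k * x k ≤ |a n k| * M := by
        calc a n k * x k ≤ |a n k * x k| := le_abs_self _
          _ = |a n k| * |x k| := abs_mul _ _
          _ ≤ |a n k| * M := mul_le_mul_of_nonneg_left hxk habs
      have h2 : -(|a n k| * |c|) ≤ a n k * c := by
        rw [← abs_mul]; exact neg_abs_le _
      have h3 : 0 ≤ (|a n k| - a n k) * M' :=
        mul_nonneg (by linarith [le_abs_self (a n k)]) hM'0
      rw [hD]
      nlinarith
    · simp only [if_neg hk, add_zero]
      have hkK : K ≤ k := by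
        simpa [hE, Finset.mem_range, not_lt] using hk
      have hxc : x k < c := hK k hkK
      have hxlo : -M ≤ x k := (abs_le.mp hxk).1
      have hcM' : c - x k ≤ M' := by
        rw [hc, hM']
        have : L ≤ |L| := le_abs_self L
        linarith
      rcases abs_cases (a n k) with ⟨he, hpos⟩ | ⟨he, hneg⟩
      · rw [he]
        have := mul_le_mul_of_nonneg_left hxc.le hpos
        nlinarith
      · rw [he]
        have h4 : (-(a n k)) * (c - x k) ≤ (-(a n k)) * M' :=
          mul_le_mul_of_nonneg_left hcM' (by linarith)
        nlinarith
  -- tsum bound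
  set g := fun n => (∑' k, a n k) * c +
      ((∑' k, |a n k| - ∑' k, a n k) * M' + (∑ k ∈ E, |a n k|) * D) with hg
  have hTg : ∀ n, T n ≤ g n := by
    intro n
    have hsum1 : Summable (fun k => a n k * c) := (hsA n).mul_right c
    have hsum2 : Summable (fun k => (|a n k| - a n k) * M') :=
      ((hsa n).sub (hsA n)).mul_right M'
    have hsum3 : Summable (fun k => if k ∈ E then |a n k| * D else 0) :=
      summable_of_ne_finset_zero (s := E) (fun b hb => if_neg hb)
    have h := Summable.tsum_le_tsum (key n) (hsx n) (hsum1.add (hsum2.add hsum3))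
    rw [Summable.tsum_add hsum1 (hsum2.add hsum3), Summable.tsum_add hsum2 hsum3] at h
    rw [tsum_mul_right, tsum_mul_right, Summable.tsum_sub (hsa n) (hsA n)] at h
    have h3 : ∑' k, (if k ∈ E then |a n k| * D else 0) = (∑ k ∈ E, |a n k|) * D := by
      rw [tsum_eq_sum (s := E) (fun b hb => if_neg hb)]
      rw [Finset.sum_mul]
      exact Finset.sum_congr rfl fun k hk => if_pos hk
    rw [h3] at h
    exact h
  have hglim : Tendsto g atTop (nhds c) := by
    have := ((hC2.mul_const c).add (((hC3.sub hC2).mul_const M').add ((hC1 E).mul_const D)))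
    simpa using this
  have hev : ∀ᶠ n in atTop, g n < L + ε :=
    hglim.eventually_lt_const (by rw [hc]; linarith)
  have hTev : ∀ᶠ n in atTop, T n ≤ L + ε := by
    filter_upwards [hev] with n hn
    exact (hTg n).trans hn.le
  exact limsup_le_of_le hTcob hTev
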